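/- Quantum Hoeffding (direct) bound for asymmetric binary quantum hypothesis testing: Let ρ, σ be quantum states on ℂ^d with σ positive definite, let α ∈ (0,1) and ε ∈ (0,1). Then β_ε(ρ‖σ) > 0 and −ln β_ε(ρ‖σ) ≥ D_α(ρ‖σ) + (α/(α−1))·ln(1/ε); equivalently, β_ε(ρ‖σ) ≤ ( Tr[ρ^α σ^{1−α}] / ε^α )^{1/(1−α)}. -/

import Mathlib

open scoped ComplexOrder Classical

noncomputable section

namespace QHT

variable {ι : Type*} [Fintype ι] [DecidableEq ι]

/-- Trace norm of a complex matrix: `Tr[√(Aᴴ A)]`. -/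
def traceNorm (A : Matrix ι ι ℂ) : ℝ :=
  (((Matrix.posSemidef_conjTranspose_mul_self A).1.eigenvectorUnitary : Matrix ι ι ℂ) *
      Matrix.diagonal (((↑) : ℝ → ℂ) ∘ Real.sqrt ∘ (Matrix.posSemidef_conjTranspose_mul_self A).1.eigenvalues) *
      (star (Matrix.posSemidef_conjTranspose_mul_self A).1.eigenvectorUnitary : Matrix ι ι ℂ)).trace.re

/-- A quantum state: positive semidefinite with unit trace. -/
def IsState (ρ : Matrix ι ι ℂ) : Prop := ρ.PosSemidef ∧ ρ.trace = 1

/-- Positive semidefinite square root (junk value `0` off the PSD matrices). -/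
def matSqrt (A : Matrix ι ι ℂ) : Matrix ι ι ℂ :=
  if h : A.PosSemidef then
    (h.1.eigenvectorUnitary : Matrix ι ι ℂ) *
      Matrix.diagonal (((↑) : ℝ → ℂ) ∘ Real.sqrt ∘ h.1.eigenvalues) *
      (star h.1.eigenvectorUnitary : Matrix ι ι ℂ)
  else 0

/-- Real power of a Hermitian matrix, applying `x ↦ x ^ s` to positive
eigenvalues and `x ↦ 0` to the remaining ones (so `A ^ 0` is the support
projection); junk value `0` off the Hermitian matrices. -/
def matRpow (A : Matrix ι ι ℂ) (s : ℝ) : Matrix ι ι ℂ :=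
  if h : A.IsHermitian then
    (h.eigenvectorUnitary : Matrix ι ι ℂ) *
      Matrix.diagonal (fun i =>
        ((if 0 < h.eigenvalues i then (h.eigenvalues i) ^ s else 0 : ℝ) : ℂ)) *
      (star (h.eigenvectorUnitary : Matrix ι ι ℂ))
  else 0

/-- Fidelity `F(ρ,σ) = ‖√ρ √σ‖₁²`. -/
def Fid (ρ σ : Matrix ι ι ℂ) : ℝ := (traceNorm (matSqrt ρ * matSqrt σ)) ^ 2

/-- Holevo fidelity `F_H(ρ,σ) = (Tr[√ρ √σ])²`. -/
def FidH (ρ σ : Matrix ι ι ℂ) : ℝ := (((matSqrt ρ * matSqrt σ).trace).re) ^ 2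

/-- `Q_s(A‖B) = Tr[A^s B^{1-s}]`. -/
def Qs (s : ℝ) (A B : Matrix ι ι ℂ) : ℝ := ((matRpow A s * matRpow B (1 - s)).trace).re

/-- `Q_min(A‖B) = min_{s ∈ [0,1]} Q_s(A‖B)`. -/
def Qmin (A B : Matrix ι ι ℂ) : ℝ :=
  sInf { x : ℝ | ∃ s ∈ Set.Icc (0 : ℝ) 1, x = Qs s A B }

/-- Bures distance. -/
def dB (ρ σ : Matrix ι ι ℂ) : ℝ := Real.sqrt (2 * (1 - Real.sqrt (Fid ρ σ)))

/-- Quantum Hellinger distance. -/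
def dH (ρ σ : Matrix ι ι ℂ) : ℝ := Real.sqrt (2 * (1 - Real.sqrt (FidH ρ σ)))

/-- `n`-fold Kronecker (tensor) power of a matrix. -/
def tensorPow {d : ℕ} (A : Matrix (Fin d) (Fin d) ℂ) (n : ℕ) :
    Matrix (Fin n → Fin d) (Fin n → Fin d) ℂ :=
  Matrix.of fun i j => ∏ k, A (i k) (j k)

/-- Optimal error probability of symmetric binary quantum hypothesis testing
with `n` copies. -/
def pErr {d : ℕ} (p : ℝ) (ρ : Matrix (Fin d) (Fin d) ℂ) (q : ℝ)
    (σ : Matrix (Fin d) (Fin d) ℂ) (n : ℕ) : ℝ :=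
  sInf { x : ℝ | ∃ Λ : Matrix (Fin n → Fin d) (Fin n → Fin d) ℂ,
    Λ.PosSemidef ∧ (1 - Λ).PosSemidef ∧
    x = p * (((1 - Λ) * tensorPow ρ n).trace).re + q * ((Λ * tensorPow σ n).trace).re }

/-- Sample complexity of symmetric binary quantum hypothesis testing. -/
def sampleComplexity {d : ℕ} (p : ℝ) (ρ : Matrix (Fin d) (Fin d) ℂ) (q : ℝ)
    (σ : Matrix (Fin d) (Fin d) ℂ) (ε : ℝ) : ℕ :=
  sInf { n : ℕ | 1 ≤ n ∧ pErr p ρ q σ n ≤ ε }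

/-- Optimal type II error `β_ε(ρ‖σ)` of asymmetric hypothesis testing. -/
def betaErr (ε : ℝ) (ρ σ : Matrix ι ι ℂ) : ℝ :=
  sInf { x : ℝ | ∃ Λ : Matrix ι ι ℂ, Λ.PosSemidef ∧ (1 - Λ).PosSemidef ∧
    (((1 - Λ) * ρ).trace).re ≤ ε ∧ x = ((Λ * σ).trace).re }

/-- Sample complexity of asymmetric binary quantum hypothesis testing. -/
def sampleComplexityAsym {d : ℕ} (ρ σ : Matrix (Fin d) (Fin d) ℂ) (ε δ : ℝ) : ℕ :=
  sInf { n : ℕ | 1 ≤ n ∧ betaErr ε (tensorPow ρ n) (tensorPow σ n) ≤ δ }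

/-- Petz–Rényi divergence `D_α(ρ‖σ)`. -/
def petzRenyi (α : ℝ) (ρ σ : Matrix ι ι ℂ) : ℝ :=
  (1 / (α - 1)) * Real.log (((matRpow ρ α * matRpow σ (1 - α)).trace).re)

/-- Sandwiched Rényi divergence `D̃_α(ρ‖σ)`. -/
def sandwichedRenyi (α : ℝ) (ρ σ : Matrix ι ι ℂ) : ℝ :=
  (1 / (α - 1)) * Real.log
    (((matRpow (matRpow σ ((1 - α) / (2 * α)) * ρ * matRpow σ ((1 - α) / (2 * α))) α).trace).re)


open Matrix

/-- `A = U * diagonal d * U⁻¹` with `U` unitary and `d` real. -/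
def Rep (A U : Matrix ι ι ℂ) (d : ι → ℝ) : Prop :=
  U * star U = 1 ∧ star U * U = 1 ∧ A = U * Matrix.diagonal (fun i => (d i : ℂ)) * star U

namespace Rep

variable {A U V : Matrix ι ι ℂ} {d e : ι → ℝ}

lemma isHermitian (h : Rep A U d) : A.IsHermitian := by
  obtain ⟨h1, h2, h3⟩ := h
  rw [h3]
  unfold Matrix.IsHermitian
  have hst : (star fun i => ((d i : ℝ) : ℂ)) = fun i => ((d i : ℝ) : ℂ) := by
    funext i; exact Complex.conj_ofReal _
  rw [Matrix.conjTranspose_mul, Matrix.conjTranspose_mul, Matrix.diagonal_conjTranspose, hst]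
  simp [Matrix.star_eq_conjTranspose, Matrix.mul_assoc]

lemma rep_spectral {A : Matrix ι ι ℂ} (hA : A.IsHermitian) :
    Rep A hA.eigenvectorUnitary hA.eigenvalues := by
  refine ⟨?_, ?_, ?_⟩
  · exact (Matrix.mem_unitaryGroup_iff).mp hA.eigenvectorUnitary.2
  · exact (Matrix.mem_unitaryGroup_iff').mp hA.eigenvectorUnitary.2
  · exact hA.spectral_theorem

lemma apply_eq (hU : Rep A U d) (hV : Rep A V e) (f : ℝ → ℝ) :
    U * diagonal (fun i => (f (d i) : ℂ)) * star U
      = V * diagonal (fun i => (f (e i) : ℂ)) * star V := by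
  set W : Matrix ι ι ℂ := star U * V with hWdef
  have h1 : diagonal (fun i => (d i : ℂ)) * W = star U * A * V := by
    rw [hU.2.2]
    calc diagonal (fun i => (d i : ℂ)) * (star U * V)
        = (star U * U) * diagonal (fun i => (d i : ℂ)) * (star U * V) := by rw [hU.2.1]; simp
      _ = star U * (U * diagonal (fun i => (d i : ℂ)) * star U) * V := by
          simp only [Matrix.mul_assoc]
  have h2 : W * diagonal (fun i => (e i : ℂ)) = star U * A * V := by
    rw [hV.2.2]
    calc (star U * V) * diagonal (fun i => (e i : ℂ))
        = star U * V * diagonal (fun i => (e i : ℂ)) * (star V * V) := by rw [hV.2.1]; simp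
      _ = star U * (V * diagonal (fun i => (e i : ℂ)) * star V) * V := by
          simp only [Matrix.mul_assoc]
  have hDW : ∀ i j, (d i : ℂ) * W i j = W i j * (e j : ℂ) := by
    intro i j
    have := congrFun (congrFun (congrArg (fun M => (M : Matrix ι ι ℂ)) (h1.trans h2.symm)) i) j
    simpa [Matrix.diagonal_mul, Matrix.mul_diagonal] using this
  have key : ∀ i j, (f (d i) : ℂ) * W i j = W i j * (f (e j) : ℂ) := by
    intro i j
    by_cases hw : W i j = 0
    · simp [hw]
    · have hde : (d i : ℂ) = (e j : ℂ) := by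
        have h0 := hDW i j
        rw [mul_comm (W i j) _] at h0
        exact mul_right_cancel₀ hw h0
      have : d i = e j := by exact_mod_cast hde
      rw [this, mul_comm]
  have hW2 : diagonal (fun i => (f (d i) : ℂ)) * W = W * diagonal (fun i => (f (e i) : ℂ)) := by
    ext i j
    simp only [Matrix.diagonal_mul, Matrix.mul_diagonal]
    exact key i j
  have hVU : V = U * W := by
    rw [hWdef, ← Matrix.mul_assoc, hU.1, Matrix.one_mul]
  have hWW : W * star W = 1 := by
    rw [hWdef]
    calc star U * V * star (star U * V) = star U * (V * star V) * U := by
          simp [Matrix.star_eq_conjTranspose, Matrix.conjTranspose_mul, Matrix.mul_assoc]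
      _ = 1 := by rw [hV.1, Matrix.mul_one, hU.2.1]
  calc U * diagonal (fun i => (f (d i) : ℂ)) * star U
      = U * (diagonal (fun i => (f (d i) : ℂ)) * (W * star W)) * star U := by
        rw [hWW, Matrix.mul_one]
    _ = U * ((diagonal (fun i => (f (d i) : ℂ)) * W) * star W) * star U := by
        simp only [Matrix.mul_assoc]
    _ = U * ((W * diagonal (fun i => (f (e i) : ℂ))) * star W) * star U := by rw [hW2]
    _ = (U * W) * diagonal (fun i => (f (e i) : ℂ)) * star (U * W) := by
        simp [Matrix.star_eq_conjTranspose, Matrix.conjTranspose_mul, Matrix.mul_assoc]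
    _ = V * diagonal (fun i => (f (e i) : ℂ)) * star V := by rw [← hVU]

protected lemma smul (h : Rep A U d) (c : ℝ) : Rep ((c : ℂ) • A) U (c • d) := by
  refine ⟨h.1, h.2.1, ?_⟩
  have hd : (c : ℂ) • Matrix.diagonal (fun i => (d i : ℂ))
      = Matrix.diagonal (fun i => (((c • d) i : ℝ) : ℂ)) := by
    ext i j
    by_cases hij : i = j
    · subst hij
      simp
    · simp [Matrix.diagonal_apply_ne _ hij]
  rw [h.2.2, ← Matrix.smul_mul, ← Matrix.mul_smul, hd]

protected lemma addSmulOne (h : Rep A U d) (t : ℝ) :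
    Rep (A + (t : ℂ) • 1) U (fun i => d i + t) := by
  refine ⟨h.1, h.2.1, ?_⟩
  have h1 : (t : ℂ) • (1 : Matrix ι ι ℂ) = U * ((t : ℂ) • 1) * star U := by
    rw [Matrix.mul_smul, Matrix.mul_one, Matrix.smul_mul, h.1]
  have h2 : Matrix.diagonal (fun i => (d i : ℂ)) + (t : ℂ) • 1
      = Matrix.diagonal (fun i => ((d i + t : ℝ) : ℂ)) := by
    ext i j
    by_cases hij : i = j
    · subst hij
      simp [Matrix.one_apply_eq]
    · simp [Matrix.diagonal_apply_ne _ hij, Matrix.one_apply_ne hij]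
  rw [h.2.2, h1, ← Matrix.add_mul, ← Matrix.mul_add, h2]

protected lemma trace_eq (h : Rep A U d) : A.trace = ∑ i, (d i : ℂ) := by
  rw [h.2.2, Matrix.trace_mul_cycle, h.2.1, Matrix.one_mul, Matrix.trace_diagonal]

lemma trace_re (h : Rep A U d) : (A.trace).re = ∑ i, d i := by
  rw [h.trace_eq, ← Complex.ofReal_sum, Complex.ofReal_re]

lemma dot_eq (h : Rep A U d) (v : ι → ℂ) :
    dotProduct (star v) (A *ᵥ v)
      = ∑ i, (d i : ℂ) * ((Complex.normSq ((star U *ᵥ v) i) : ℝ) : ℂ) := by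
  set w := star U *ᵥ v with hw
  have h1 : A *ᵥ v = U *ᵥ (Matrix.diagonal (fun i => (d i : ℂ)) *ᵥ w) := by
    rw [hw, Matrix.mulVec_mulVec, Matrix.mulVec_mulVec, ← h.2.2]
  have h2 : star v ᵥ* U = star w := by
    rw [hw, Matrix.star_mulVec, Matrix.star_eq_conjTranspose, Matrix.conjTranspose_conjTranspose]
  rw [h1, Matrix.dotProduct_mulVec, h2]
  simp only [dotProduct, Matrix.mulVec_diagonal, Pi.star_apply]
  congr 1
  funext i
  have hns : star (w i) * w i = ((Complex.normSq (w i) : ℝ) : ℂ) := by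
    rw [Complex.star_def, mul_comm, Complex.mul_conj]
  calc star (w i) * ((d i : ℂ) * w i) = (d i : ℂ) * (star (w i) * w i) := by ring
    _ = (d i : ℂ) * ((Complex.normSq (w i) : ℝ) : ℂ) := by rw [hns]

protected lemma mul {B : Matrix ι ι ℂ} (hA : Rep A U d) (hB : Rep B U e) :
    Rep (A * B) U (d * e) := by
  refine ⟨hA.1, hA.2.1, ?_⟩
  rw [hA.2.2, hB.2.2]
  calc U * Matrix.diagonal (fun i => (d i : ℂ)) * star U *
        (U * Matrix.diagonal (fun i => (e i : ℂ)) * star U)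
      = U * (Matrix.diagonal (fun i => (d i : ℂ)) * (star U * U) *
          Matrix.diagonal (fun i => (e i : ℂ))) * star U := by
        simp only [Matrix.mul_assoc]
    _ = U * (Matrix.diagonal (fun i => (d i : ℂ)) * Matrix.diagonal (fun i => (e i : ℂ)))
          * star U := by rw [hA.2.1]; simp [Matrix.mul_assoc]
    _ = U * Matrix.diagonal (fun i => ((d * e) i : ℂ)) * star U := by
        rw [Matrix.diagonal_mul_diagonal]
        congr 2
        funext i
        push_cast
        simp [Pi.mul_apply]

protected lemma inv (h : Rep A U d) (hd : ∀ i, d i ≠ 0) : Rep A⁻¹ U (fun i => (d i)⁻¹) := by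
  refine ⟨h.1, h.2.1, ?_⟩
  apply Matrix.inv_eq_right_inv
  rw [h.2.2]
  calc U * Matrix.diagonal (fun i => (d i : ℂ)) * star U *
        (U * Matrix.diagonal (fun i => (((d i)⁻¹ : ℝ) : ℂ)) * star U)
      = U * (Matrix.diagonal (fun i => (d i : ℂ)) * (star U * U) *
          Matrix.diagonal (fun i => (((d i)⁻¹ : ℝ) : ℂ))) * star U := by
        simp only [Matrix.mul_assoc]
    _ = U * (Matrix.diagonal (fun i => (d i : ℂ)) *
          Matrix.diagonal (fun i => (((d i)⁻¹ : ℝ) : ℂ))) * star U := by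
        rw [h.2.1]; simp [Matrix.mul_assoc]
    _ = U * star U := by
        rw [Matrix.diagonal_mul_diagonal]
        have : (fun i => (d i : ℂ) * (((d i)⁻¹ : ℝ) : ℂ)) = fun _ => (1 : ℂ) := by
          funext i
          push_cast
          field_simp [hd i]
        rw [this, Matrix.diagonal_one, Matrix.mul_one]
    _ = 1 := h.1

lemma posSemidef (h : Rep A U d) (hd : ∀ i, 0 ≤ d i) : A.PosSemidef := by
  rw [h.2.2, Matrix.star_eq_conjTranspose]
  exact (Matrix.PosSemidef.diagonal fun i => by
    simpa using Complex.real_le_real.mpr (hd i)).mul_mul_conjTranspose_same U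

lemma vec_ne_zero (h : Rep A U d) {v : ι → ℂ} (hv : v ≠ 0) : star U *ᵥ v ≠ 0 := by
  intro hz
  apply hv
  have : U *ᵥ (star U *ᵥ v) = v := by
    rw [Matrix.mulVec_mulVec, h.1, Matrix.one_mulVec]
  rw [← this, hz, Matrix.mulVec_zero]

lemma posDef (h : Rep A U d) (hd : ∀ i, 0 < d i) : A.PosDef := by
  refine Matrix.PosDef.of_dotProduct_mulVec_pos h.isHermitian fun v hv => ?_
  rw [h.dot_eq v]
  have hsum : ∑ i, (d i : ℂ) * ((Complex.normSq ((star U *ᵥ v) i) : ℝ) : ℂ)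
      = (((∑ i, d i * Complex.normSq ((star U *ᵥ v) i)) : ℝ) : ℂ) := by
    push_cast
    rfl
  rw [hsum]
  rw [Complex.zero_lt_real]
  have hw := h.vec_ne_zero hv
  obtain ⟨i0, hi0⟩ : ∃ i, (star U *ᵥ v) i ≠ 0 := by
    by_contra hc
    push_neg at hc
    exact hw (funext hc)
  apply Finset.sum_pos' (fun i _ => mul_nonneg (hd i).le (Complex.normSq_nonneg _))
  exact ⟨i0, Finset.mem_univ _, mul_pos (hd i0) (Complex.normSq_pos.mpr hi0)⟩

end Rep

/-- positive-part function used by `matRpow`. -/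
def rfun (s x : ℝ) : ℝ := if 0 < x then x ^ s else 0

lemma rfun_nonneg {s x : ℝ} : 0 ≤ rfun s x := by
  unfold rfun
  split
  · next h => positivity
  · exact le_refl 0

lemma matRpow_eq {A U : Matrix ι ι ℂ} {d : ι → ℝ} (h : Rep A U d) (s : ℝ) :
    matRpow A s = U * Matrix.diagonal (fun i => ((rfun s (d i) : ℝ) : ℂ)) * star U := by
  have hA := h.isHermitian
  rw [matRpow, dif_pos hA]
  exact Rep.apply_eq (Rep.rep_spectral hA) h (rfun s)

lemma Rep.matRpow {A U : Matrix ι ι ℂ} {d : ι → ℝ} (h : Rep A U d) (s : ℝ) :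
    Rep (matRpow A s) U (fun i => rfun s (d i)) :=
  ⟨h.1, h.2.1, matRpow_eq h s⟩

lemma Rep.re_dot {A U : Matrix ι ι ℂ} {d : ι → ℝ} (h : Rep A U d) (v : ι → ℂ) :
    (dotProduct (star v) (A *ᵥ v)).re
      = ∑ i, d i * Complex.normSq ((star U *ᵥ v) i) := by
  rw [h.dot_eq v]
  have : ∑ i, (d i : ℂ) * ((Complex.normSq ((star U *ᵥ v) i) : ℝ) : ℂ)
      = (((∑ i, d i * Complex.normSq ((star U *ᵥ v) i)) : ℝ) : ℂ) := by
    push_cast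
    rfl
  rw [this, Complex.ofReal_re]

lemma posSemidef_of_re {A : Matrix ι ι ℂ} (hA : A.IsHermitian)
    (h : ∀ v, 0 ≤ (dotProduct (star v) (A *ᵥ v)).re) : A.PosSemidef := by
  refine Matrix.PosSemidef.of_dotProduct_mulVec_nonneg hA fun v => ?_
  have e1 : dotProduct (star v) (A *ᵥ v)
      = star (dotProduct (star (A *ᵥ v)) v) := star_dotProduct _ _
  have e2 : dotProduct (star (A *ᵥ v)) v = dotProduct (star v) (A *ᵥ v) := by
    rw [Matrix.star_mulVec, ← Matrix.dotProduct_mulVec, hA.eq]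
  have hst : star (dotProduct (star v) (A *ᵥ v))
      = dotProduct (star v) (A *ᵥ v) := by
    conv_lhs => rw [e1, star_star, e2]
  have him : (dotProduct (star v) (A *ᵥ v)).im = 0 := by
    have := congrArg Complex.im hst
    simp only [Complex.star_def, Complex.conj_im] at this
    linarith
  rw [Complex.le_def]
  exact ⟨by simpa using h v, by simp [him]⟩

lemma trace_re_nonneg_of_posSemidef {X : Matrix ι ι ℂ} (hX : X.PosSemidef) :
    0 ≤ (X.trace).re := by
  rw [(Rep.rep_spectral hX.1).trace_re]
  exact Finset.sum_nonneg fun i _ => hX.eigenvalues_nonneg i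

lemma trace_mul_re_nonneg {X Y : Matrix ι ι ℂ} (hX : X.PosSemidef) (hY : Y.PosSemidef) :
    0 ≤ ((X * Y).trace).re := by
  have hR := Rep.rep_spectral hX.1
  set S : Matrix ι ι ℂ := (hX.1.eigenvectorUnitary : Matrix ι ι ℂ) *
    Matrix.diagonal (fun i => ((Real.sqrt (hX.1.eigenvalues i) : ℝ) : ℂ)) *
    star (hX.1.eigenvectorUnitary : Matrix ι ι ℂ) with hS
  have hRS : Rep S (hX.1.eigenvectorUnitary : Matrix ι ι ℂ)
      (fun i => Real.sqrt (hX.1.eigenvalues i)) := ⟨hR.1, hR.2.1, rfl⟩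
  have hSS : S * S = X := by
    rw [(hRS.mul hRS).2.2]
    refine Eq.trans ?_ hR.2.2.symm
    congr 2
    congr 1
    funext i
    simp only [Pi.mul_apply]
    rw [Real.mul_self_sqrt (hX.eigenvalues_nonneg i)]
  have h1 : (X * Y).trace = (S * Y * S).trace := by
    conv_lhs => rw [← hSS]
    rw [Matrix.trace_mul_cycle S Y S]
  have h2 : (S * Y * S).PosSemidef := by
    have h3 := hY.mul_mul_conjTranspose_same S
    rwa [hRS.isHermitian.eq] at h3
  rw [h1]
  exact trace_re_nonneg_of_posSemidef h2

lemma trace_mul_re_mono {X X' Y : Matrix ι ι ℂ} (h : (X' - X).PosSemidef)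
    (hY : Y.PosSemidef) : ((X * Y).trace).re ≤ ((X' * Y).trace).re := by
  have h0 := trace_mul_re_nonneg h hY
  rw [Matrix.sub_mul, Matrix.trace_sub, Complex.sub_re] at h0
  linarith

open MeasureTheory


/-- `∫₀^∞ u^{s-1}/(1+u) du`. -/
def Cint (s : ℝ) : ℝ := ∫ t in Set.Ioi (0 : ℝ), t ^ (s - 1) * (1 / (1 + t))

lemma integrableOn_aux {s x : ℝ} (hs : s ∈ Set.Ioo (0 : ℝ) 1) (hx : 0 < x) :
    IntegrableOn (fun t => t ^ (s - 1) * (x / (x + t))) (Set.Ioi (0 : ℝ)) := by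
  obtain ⟨hs0, hs1⟩ := hs
  have hcont : ContinuousOn (fun t : ℝ => t ^ (s - 1) * (x / (x + t))) (Set.Ioi 0) := by
    apply ContinuousOn.mul
    · exact ContinuousOn.rpow_const continuousOn_id fun t ht => Or.inl (ne_of_gt ht)
    · exact ContinuousOn.div continuousOn_const
        (continuousOn_const.add continuousOn_id)
        (fun t ht => by have : (0:ℝ) < t := ht; positivity)
  have h1 : IntegrableOn (fun t => t ^ (s - 1) * (x / (x + t))) (Set.Ioc (0:ℝ) 1) := by
    have hg : IntegrableOn (fun t : ℝ => t ^ (s - 1)) (Set.Ioc (0:ℝ) 1) := by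
      have := intervalIntegral.intervalIntegrable_rpow' (a := 0) (b := 1)
        (show (-1:ℝ) < s - 1 by linarith)
      rwa [intervalIntegrable_iff_integrableOn_Ioc_of_le (by norm_num)] at this
    apply Integrable.mono' hg
    · exact (hcont.mono Set.Ioc_subset_Ioi_self).aestronglyMeasurable measurableSet_Ioc
    · filter_upwards [ae_restrict_mem measurableSet_Ioc] with t ht
      obtain ⟨ht0, _⟩ := ht
      have hxt : 0 < x + t := by linarith
      rw [Real.norm_eq_abs, abs_of_nonneg (by positivity)]
      have hfrac : x / (x + t) ≤ 1 := by
        rw [div_le_one hxt]; linarith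
      nlinarith [Real.rpow_nonneg ht0.le (s-1), Real.rpow_pos_of_pos ht0 (s-1),
        div_nonneg hx.le hxt.le]
  have h2 : IntegrableOn (fun t => t ^ (s - 1) * (x / (x + t))) (Set.Ioi (1:ℝ)) := by
    have hg : IntegrableOn (fun t : ℝ => x * t ^ (s - 2)) (Set.Ioi (1:ℝ)) :=
      (integrableOn_Ioi_rpow_of_lt (show s - 2 < -1 by linarith) one_pos).const_mul x
    apply Integrable.mono' hg
    · exact (hcont.mono fun t (ht : (1:ℝ) < t) => by exact lt_trans one_pos ht)
        |>.aestronglyMeasurable measurableSet_Ioi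
    · filter_upwards [ae_restrict_mem measurableSet_Ioi] with t ht
      have ht0 : (0:ℝ) < t := lt_trans one_pos ht
      have hxt : 0 < x + t := by linarith
      rw [Real.norm_eq_abs, abs_of_nonneg (by positivity)]
      have hfrac : x / (x + t) ≤ x / t := by
        apply div_le_div_of_nonneg_left hx.le ht0
        linarith
      have h3 : t ^ (s - 1) * (x / t) = x * t ^ (s - 2) := by
        rw [show s - 2 = (s - 1) + (-1) by ring, Real.rpow_add ht0, Real.rpow_neg_one]
        field_simp
      calc t ^ (s - 1) * (x / (x + t)) ≤ t ^ (s - 1) * (x / t) := by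
            apply mul_le_mul_of_nonneg_left hfrac (Real.rpow_nonneg ht0.le _)
        _ = x * t ^ (s - 2) := h3
  have hsub : Set.Ioi (0:ℝ) ⊆ Set.Ioc (0:ℝ) 1 ∪ Set.Ioi 1 := by
    intro t ht
    by_cases h : t ≤ 1
    · exact Or.inl ⟨ht, h⟩
    · exact Or.inr (by push_neg at h; exact h)
  exact (h1.union h2).mono_set hsub

lemma Cint_pos {s : ℝ} (hs : s ∈ Set.Ioo (0 : ℝ) 1) : 0 < Cint s := by
  have hint : IntegrableOn (fun t : ℝ => t ^ (s - 1) * (1 / (1 + t))) (Set.Ioi (0:ℝ)) := by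
    simpa using integrableOn_aux hs one_pos
  rw [Cint]
  rw [setIntegral_pos_iff_support_of_nonneg_ae]
  · have hsub : Set.Ioi (0:ℝ) ⊆ Function.support (fun t : ℝ => t ^ (s - 1) * (1 / (1 + t)))
        ∩ Set.Ioi 0 := by
      intro t ht
      have ht0 : (0:ℝ) < t := ht
      refine ⟨?_, ht⟩
      have : 0 < t ^ (s - 1) * (1 / (1 + t)) := by
        have := Real.rpow_pos_of_pos ht0 (s - 1)
        have h1t : (0:ℝ) < 1 + t := by linarith
        positivity
      exact ne_of_gt this
    calc (0:ENNReal) < volume (Set.Ioi (0:ℝ)) := by simp [Real.volume_Ioi]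
      _ ≤ _ := measure_mono hsub
  · filter_upwards [ae_restrict_mem measurableSet_Ioi] with t ht
    have ht0 : (0:ℝ) < t := ht
    have h1t : (0:ℝ) < 1 + t := by linarith
    positivity
  · exact hint

lemma integral_aux {s x : ℝ} (hs : s ∈ Set.Ioo (0 : ℝ) 1) (hx : 0 < x) :
    ∫ t in Set.Ioi (0:ℝ), t ^ (s - 1) * (x / (x + t)) = x ^ s * Cint s := by
  have h := MeasureTheory.integral_comp_mul_left_Ioi
    (fun t => t ^ (s - 1) * (x / (x + t))) 0 hx
  rw [mul_zero] at h
  have hLHS : ∫ u in Set.Ioi (0:ℝ), (fun t => t ^ (s - 1) * (x / (x + t))) (x * u)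
      = ∫ u in Set.Ioi (0:ℝ), x ^ (s-1) * (u ^ (s - 1) * (1 / (1 + u))) := by
    apply setIntegral_congr_fun measurableSet_Ioi
    intro u hu
    have hu0 : (0:ℝ) < u := hu
    simp only
    rw [Real.mul_rpow hx.le hu0.le]
    have hfr : x / (x + x * u) = 1 / (1 + u) := by
      rw [show x + x * u = x * (1 + u) by ring, div_mul_eq_div_div, div_self (ne_of_gt hx)]
    rw [hfr]
    ring
  rw [hLHS, MeasureTheory.integral_const_mul] at h
  rw [← Cint] at h
  have hxs : x * x ^ (s - 1) = x ^ s := by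
    have h4 := Real.rpow_add hx (s - 1) 1
    rw [Real.rpow_one, show (s - 1) + 1 = s by ring] at h4
    rw [h4]
    ring
  rw [smul_eq_mul] at h
  have h2 : x * (x ^ (s - 1) * Cint s) = ∫ t in Set.Ioi (0:ℝ), t ^ (s - 1) * (x / (x + t)) := by
    rw [h, ← mul_assoc, mul_inv_cancel₀ (ne_of_gt hx), one_mul]
  rw [← h2, ← mul_assoc, hxs]


lemma rep_one : Rep (1 : Matrix ι ι ℂ) 1 (fun _ => 1) := by
  refine ⟨by simp, by simp, ?_⟩
  have : Matrix.diagonal (fun _ : ι => ((1:ℝ) : ℂ)) = 1 := by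
    rw [show (fun _ : ι => ((1:ℝ):ℂ)) = fun _ : ι => (1:ℂ) by push_cast; rfl,
      Matrix.diagonal_one]
  rw [this]
  simp

lemma Rep.one_of (h : Rep A U d) : Rep (1 : Matrix ι ι ℂ) U (fun _ => 1) := by
  refine ⟨h.1, h.2.1, ?_⟩
  have : Matrix.diagonal (fun _ : ι => ((1:ℝ) : ℂ)) = 1 := by
    rw [show (fun _ : ι => ((1:ℝ):ℂ)) = fun _ : ι => (1:ℂ) by push_cast; rfl,
      Matrix.diagonal_one]
  rw [this, Matrix.mul_one, h.1]

lemma smul_one_posSemidef {t : ℝ} (ht : 0 ≤ t) :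
    ((t : ℂ) • (1 : Matrix ι ι ℂ)).PosSemidef := by
  have h1 := (rep_one (ι := ι)).smul t
  exact h1.posSemidef fun i => by simpa using ht

lemma inv_dot_antitone {A B : Matrix ι ι ℂ} (hA : A.PosDef) (hB : B.PosDef)
    (hAB : (B - A).PosSemidef) (v : ι → ℂ) :
    (dotProduct (star v) (B⁻¹ *ᵥ v)).re
      ≤ (dotProduct (star v) (A⁻¹ *ᵥ v)).re := by
  have hAA : A * A⁻¹ = 1 := Matrix.mul_nonsing_inv A (Ne.isUnit hA.det_pos.ne')
  have hA'A : A⁻¹ * A = 1 := Matrix.nonsing_inv_mul A (Ne.isUnit hA.det_pos.ne')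
  have hBB : B * B⁻¹ = 1 := Matrix.mul_nonsing_inv B (Ne.isUnit hB.det_pos.ne')
  have hAinvH : (A⁻¹).conjTranspose = A⁻¹ := by
    rw [Matrix.conjTranspose_nonsing_inv, hA.isHermitian.eq]
  set w : ι → ℂ := B⁻¹ *ᵥ v with hw
  set z : ι → ℂ := A⁻¹ *ᵥ v - w with hz
  have hBw : B *ᵥ w = v := by rw [hw, Matrix.mulVec_mulVec, hBB, Matrix.one_mulVec]
  have hAz : A *ᵥ z = v - A *ᵥ w := by
    rw [hz, Matrix.mulVec_sub, Matrix.mulVec_mulVec, hAA, Matrix.one_mulVec]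
  have hstz : star z = star (A⁻¹ *ᵥ v) - star w := by rw [hz, star_sub]
  have hkey1 : dotProduct (star (A⁻¹ *ᵥ v)) v
      = dotProduct (star v) (A⁻¹ *ᵥ v) := by
    rw [Matrix.star_mulVec, hAinvH, ← Matrix.dotProduct_mulVec]
  have hkey2 : dotProduct (star (A⁻¹ *ᵥ v)) (A *ᵥ w)
      = dotProduct (star v) w := by
    rw [Matrix.star_mulVec, hAinvH, ← Matrix.dotProduct_mulVec, Matrix.mulVec_mulVec, hA'A,
      Matrix.one_mulVec]
  have hmain : dotProduct (star z) (A *ᵥ z)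
        + dotProduct (star w) ((B - A) *ᵥ w)
      = dotProduct (star v) (A⁻¹ *ᵥ v) - dotProduct (star v) (B⁻¹ *ᵥ v) := by
    have e1 : dotProduct (star z) (A *ᵥ z)
        = dotProduct (star (A⁻¹ *ᵥ v)) (v - A *ᵥ w)
          - dotProduct (star w) (v - A *ᵥ w) := by
      rw [hAz, hstz, sub_dotProduct]
    have e2 : dotProduct (star w) ((B - A) *ᵥ w)
        = dotProduct (star w) (v - A *ᵥ w) := by
      rw [Matrix.sub_mulVec, hBw]
    rw [e1, e2, sub_add_cancel, dotProduct_sub, hkey1, hkey2]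
  have h1 : 0 ≤ (dotProduct (star z) (A *ᵥ z)).re := by
    have := hA.posSemidef.re_dotProduct_nonneg z
    simpa using this
  have h2 : 0 ≤ (dotProduct (star w) ((B - A) *ᵥ w)).re := by
    have := hAB.re_dotProduct_nonneg w
    simpa using this
  have h3 := congrArg Complex.re hmain
  rw [Complex.add_re, Complex.sub_re] at h3
  linarith

lemma rep_integral {A U : Matrix ι ι ℂ} {d : ι → ℝ} (h : Rep A U d) (hd : ∀ i, 0 < d i)
    {s : ℝ} (hs : s ∈ Set.Ioo (0:ℝ) 1) (v : ι → ℂ) :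
    IntegrableOn (fun t : ℝ => t ^ (s-1) * ((dotProduct (star v) v).re
        - t * (dotProduct (star v) ((A + (t:ℂ) • 1)⁻¹ *ᵥ v)).re)) (Set.Ioi (0:ℝ))
    ∧ ∫ t in Set.Ioi (0:ℝ), (fun t : ℝ => t ^ (s-1) * ((dotProduct (star v) v).re
        - t * (dotProduct (star v) ((A + (t:ℂ) • 1)⁻¹ *ᵥ v)).re)) t
      = Cint s * (dotProduct (star v) (matRpow A s *ᵥ v)).re := by
  set a : ι → ℝ := fun i => Complex.normSq ((star U *ᵥ v) i) with ha
  have hS : (dotProduct (star v) v).re = ∑ i, a i := by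
    have := h.one_of.re_dot v
    rw [Matrix.one_mulVec] at this
    simpa using this
  have hinv : ∀ t : ℝ, 0 < t →
      (dotProduct (star v) ((A + (t:ℂ) • 1)⁻¹ *ᵥ v)).re
        = ∑ i, (d i + t)⁻¹ * a i := by
    intro t ht
    have hrep := (h.addSmulOne t).inv (fun i => by have := hd i; positivity)
    exact hrep.re_dot v
  have hEq : ∀ t ∈ Set.Ioi (0:ℝ),
      t ^ (s-1) * ((dotProduct (star v) v).re
        - t * (dotProduct (star v) ((A + (t:ℂ) • 1)⁻¹ *ᵥ v)).re)
      = ∑ i, a i * (t ^ (s-1) * (d i / (d i + t))) := by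
    intro t ht
    have ht0 : (0:ℝ) < t := ht
    rw [hS, hinv t ht0, Finset.mul_sum, ← Finset.sum_sub_distrib, Finset.mul_sum]
    apply Finset.sum_congr rfl
    intro i _
    have hdt : 0 < d i + t := by have := hd i; linarith
    field_simp
    ring
  have hGint : IntegrableOn (fun t => ∑ i, a i * (t ^ (s-1) * (d i / (d i + t))))
      (Set.Ioi (0:ℝ)) := by
    apply MeasureTheory.integrable_finset_sum
    intro i _
    exact (integrableOn_aux hs (hd i)).const_mul (a i)
  have hGval : ∫ t in Set.Ioi (0:ℝ), ∑ i, a i * (t ^ (s-1) * (d i / (d i + t)))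
      = Cint s * ∑ i, (d i) ^ s * a i := by
    rw [MeasureTheory.integral_finset_sum _ (fun i _ => (integrableOn_aux hs (hd i)).const_mul (a i))]
    rw [Finset.mul_sum]
    apply Finset.sum_congr rfl
    intro i _
    rw [MeasureTheory.integral_const_mul, integral_aux hs (hd i)]
    ring
  have hq : (dotProduct (star v) (matRpow A s *ᵥ v)).re = ∑ i, (d i) ^ s * a i := by
    have := (h.matRpow s).re_dot v
    rw [this]
    apply Finset.sum_congr rfl
    intro i _
    rw [rfun, if_pos (hd i)]
  constructor
  · exact hGint.congr_fun (fun t ht => (hEq t ht).symm) measurableSet_Ioi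
  · rw [MeasureTheory.setIntegral_congr_fun measurableSet_Ioi hEq, hGval, hq]

lemma rpow_loewner_posdef {A B : Matrix ι ι ℂ} (hA : A.PosDef) (hB : B.PosDef)
    (hAB : (B - A).PosSemidef) {s : ℝ} (hs : s ∈ Set.Ioo (0:ℝ) 1) :
    (matRpow B s - matRpow A s).PosSemidef := by
  have hRA := Rep.rep_spectral hA.isHermitian
  have hRB := Rep.rep_spectral hB.isHermitian
  apply posSemidef_of_re (((hRB.matRpow s).isHermitian).sub ((hRA.matRpow s).isHermitian))
  intro v
  have hsub : (dotProduct (star v) ((matRpow B s - matRpow A s) *ᵥ v)).re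
      = (dotProduct (star v) (matRpow B s *ᵥ v)).re
        - (dotProduct (star v) (matRpow A s *ᵥ v)).re := by
    rw [Matrix.sub_mulVec, dotProduct_sub, Complex.sub_re]
  rw [hsub, sub_nonneg]
  have HA := rep_integral hRA hA.eigenvalues_pos hs v
  have HB := rep_integral hRB hB.eigenvalues_pos hs v
  have hmono : ∫ t in Set.Ioi (0:ℝ), (fun t : ℝ => t ^ (s-1) * ((dotProduct (star v) v).re
        - t * (dotProduct (star v) ((A + (t:ℂ) • 1)⁻¹ *ᵥ v)).re)) t
      ≤ ∫ t in Set.Ioi (0:ℝ), (fun t : ℝ => t ^ (s-1) * ((dotProduct (star v) v).re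
        - t * (dotProduct (star v) ((B + (t:ℂ) • 1)⁻¹ *ᵥ v)).re)) t := by
    apply MeasureTheory.setIntegral_mono_on HA.1 HB.1 measurableSet_Ioi
    intro t ht
    have ht0 : (0:ℝ) < t := ht
    have hId : ((t:ℂ) • (1 : Matrix ι ι ℂ)).PosSemidef := smul_one_posSemidef ht0.le
    have hAt : (A + (t:ℂ) • 1).PosDef := hA.add_posSemidef hId
    have hBt : (B + (t:ℂ) • 1).PosDef := hB.add_posSemidef hId
    have hdiff : ((B + (t:ℂ) • 1) - (A + (t:ℂ) • 1)).PosSemidef := by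
      have : (B + (t:ℂ) • 1) - (A + (t:ℂ) • 1) = B - A := by abel
      rw [this]
      exact hAB
    have hinv := inv_dot_antitone hAt hBt hdiff v
    have hts : (0:ℝ) ≤ t ^ (s-1) := Real.rpow_nonneg ht0.le _
    apply mul_le_mul_of_nonneg_left _ hts
    have := mul_le_mul_of_nonneg_left hinv ht0.le
    linarith
  rw [HA.2, HB.2] at hmono
  exact le_of_mul_le_mul_left hmono (Cint_pos hs)

lemma smul_one_posDef {t : ℝ} (ht : 0 < t) :
    ((t : ℂ) • (1 : Matrix ι ι ℂ)).PosDef := by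
  have h1 := (rep_one (ι := ι)).smul t
  exact h1.posDef fun i => by simpa using ht

protected lemma Rep.sub {A B U : Matrix ι ι ℂ} {d e : ι → ℝ} (hA : Rep A U d)
    (hB : Rep B U e) : Rep (A - B) U (d - e) := by
  refine ⟨hA.1, hA.2.1, ?_⟩
  rw [hA.2.2, hB.2.2, ← Matrix.sub_mul, ← Matrix.mul_sub]
  congr 2
  ext i j
  by_cases hij : i = j
  · subst hij
    simp
  · simp [Matrix.diagonal_apply_ne _ hij]

lemma Rep.matrix_eq {A B U : Matrix ι ι ℂ} {d e : ι → ℝ} (hA : Rep A U d)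
    (hB : Rep B U e) (hde : ∀ i, d i = e i) : A = B := by
  have h5 : (fun i => ((d i : ℝ) : ℂ)) = fun i => ((e i : ℝ) : ℂ) :=
    funext fun i => by rw [hde i]
  rw [hA.2.2, hB.2.2, h5]

lemma matRpow_posSemidef {A : Matrix ι ι ℂ} (hA : A.PosSemidef) (s : ℝ) :
    (matRpow A s).PosSemidef :=
  ((Rep.rep_spectral hA.1).matRpow s).posSemidef fun _ => rfun_nonneg

lemma tendsto_rfun_shift {x : ℝ} (hx : 0 ≤ x) {s : ℝ} (hs0 : 0 < s) :
    Filter.Tendsto (fun δ : ℝ => rfun s (x + δ)) (nhdsWithin 0 (Set.Ioi 0)) (nhds (rfun s x)) := by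
  rcases lt_or_eq_of_le hx with hpos | hzero
  · have hcont : Filter.Tendsto (fun δ : ℝ => (x + δ) ^ s)
        (nhdsWithin 0 (Set.Ioi 0)) (nhds (x ^ s)) := by
      have h1 : ContinuousAt (fun y : ℝ => y ^ s) x :=
        Real.continuousAt_rpow_const _ _ (Or.inl (ne_of_gt hpos))
      have h2 : Filter.Tendsto (fun δ : ℝ => x + δ) (nhdsWithin 0 (Set.Ioi 0)) (nhds x) := by
        have h3 : Filter.Tendsto (fun δ : ℝ => x + δ) (nhds (0:ℝ)) (nhds (x + 0)) :=
          Filter.tendsto_id.const_add x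
        rw [add_zero] at h3
        exact h3.mono_left nhdsWithin_le_nhds
      exact h1.tendsto.comp h2
    have heq : ∀ᶠ δ in nhdsWithin (0:ℝ) (Set.Ioi 0), (x + δ) ^ s = rfun s (x + δ) := by
      filter_upwards [self_mem_nhdsWithin] with δ hδ
      have hδ0 : (0:ℝ) < δ := hδ
      rw [rfun, if_pos (by linarith)]
    rw [show rfun s x = x ^ s by rw [rfun, if_pos hpos]]
    exact hcont.congr' heq
  · have hcont : Filter.Tendsto (fun δ : ℝ => (x + δ) ^ s)
        (nhdsWithin 0 (Set.Ioi 0)) (nhds 0) := by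
      have h1 : ContinuousAt (fun y : ℝ => y ^ s) 0 :=
        Real.continuousAt_rpow_const _ _ (Or.inr hs0.le)
      have h2 : Filter.Tendsto (fun δ : ℝ => x + δ) (nhdsWithin 0 (Set.Ioi 0)) (nhds 0) := by
        have h3 : Filter.Tendsto (fun δ : ℝ => x + δ) (nhds (0:ℝ)) (nhds (x + 0)) :=
          Filter.tendsto_id.const_add x
        rw [add_zero] at h3
        rw [← hzero] at h3 ⊢
        exact h3.mono_left nhdsWithin_le_nhds
      have h4 := h1.tendsto.comp h2
      rwa [Real.zero_rpow (ne_of_gt hs0)] at h4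
    have heq : ∀ᶠ δ in nhdsWithin (0:ℝ) (Set.Ioi 0), (x + δ) ^ s = rfun s (x + δ) := by
      filter_upwards [self_mem_nhdsWithin] with δ hδ
      have hδ0 : (0:ℝ) < δ := hδ
      rw [rfun, if_pos (by linarith)]
    rw [show rfun s x = 0 by rw [rfun, if_neg (by rw [← hzero]; exact lt_irrefl 0)]]
    exact hcont.congr' heq

/-- Löwner–Heinz for positive semidefinite matrices. -/
lemma rpow_loewner {A B : Matrix ι ι ℂ} (hA : A.PosSemidef) (hB : B.PosSemidef)
    (hAB : (B - A).PosSemidef) {s : ℝ} (hs : s ∈ Set.Ioo (0:ℝ) 1) :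
    (matRpow B s - matRpow A s).PosSemidef := by
  have hRA := Rep.rep_spectral hA.1
  have hRB := Rep.rep_spectral hB.1
  apply posSemidef_of_re (((hRB.matRpow s).isHermitian).sub ((hRA.matRpow s).isHermitian))
  intro v
  have hsub : (dotProduct (star v) ((matRpow B s - matRpow A s) *ᵥ v)).re
      = (dotProduct (star v) (matRpow B s *ᵥ v)).re
        - (dotProduct (star v) (matRpow A s *ᵥ v)).re := by
    rw [Matrix.sub_mulVec, dotProduct_sub, Complex.sub_re]
  rw [hsub, sub_nonneg, (hRA.matRpow s).re_dot v, (hRB.matRpow s).re_dot v]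
  set aA : ι → ℝ := fun i => Complex.normSq
    ((star (hA.1.eigenvectorUnitary : Matrix ι ι ℂ) *ᵥ v) i) with haA
  set aB : ι → ℝ := fun i => Complex.normSq
    ((star (hB.1.eigenvectorUnitary : Matrix ι ι ℂ) *ᵥ v) i) with haB
  have hlimA : Filter.Tendsto (fun δ : ℝ => ∑ i, rfun s (hA.1.eigenvalues i + δ) * aA i)
      (nhdsWithin 0 (Set.Ioi 0)) (nhds (∑ i, rfun s (hA.1.eigenvalues i) * aA i)) :=
    tendsto_finset_sum _ fun i _ =>
      (tendsto_rfun_shift (hA.eigenvalues_nonneg i) hs.1).mul_const _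
  have hlimB : Filter.Tendsto (fun δ : ℝ => ∑ i, rfun s (hB.1.eigenvalues i + δ) * aB i)
      (nhdsWithin 0 (Set.Ioi 0)) (nhds (∑ i, rfun s (hB.1.eigenvalues i) * aB i)) :=
    tendsto_finset_sum _ fun i _ =>
      (tendsto_rfun_shift (hB.eigenvalues_nonneg i) hs.1).mul_const _
  apply le_of_tendsto_of_tendsto hlimA hlimB
  filter_upwards [self_mem_nhdsWithin] with δ hδ
  have hδ0 : (0:ℝ) < δ := hδ
  have hId : ((δ:ℂ) • (1 : Matrix ι ι ℂ)).PosDef := smul_one_posDef hδ0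
  have hAδ : (A + (δ:ℂ) • 1).PosDef := by
    have := hId.add_posSemidef hA
    rwa [add_comm] at this
  have hBδ : (B + (δ:ℂ) • 1).PosDef := by
    have := hId.add_posSemidef hB
    rwa [add_comm] at this
  have hdiff : ((B + (δ:ℂ) • 1) - (A + (δ:ℂ) • 1)).PosSemidef := by
    have h5 : (B + (δ:ℂ) • 1) - (A + (δ:ℂ) • 1) = B - A := by abel
    rw [h5]
    exact hAB
  have hPSD := rpow_loewner_posdef hAδ hBδ hdiff hs
  have hq := hPSD.re_dotProduct_nonneg v
  have hq' : 0 ≤ (dotProduct (star v)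
      ((matRpow (B + (δ:ℂ) • 1) s - matRpow (A + (δ:ℂ) • 1) s) *ᵥ v)).re := by
    simpa using hq
  rw [Matrix.sub_mulVec, dotProduct_sub, Complex.sub_re, sub_nonneg] at hq'
  have hqA : (dotProduct (star v) (matRpow (A + (δ:ℂ) • 1) s *ᵥ v)).re
      = ∑ i, rfun s (hA.1.eigenvalues i + δ) * aA i :=
    ((hRA.addSmulOne δ).matRpow s).re_dot v
  have hqB : (dotProduct (star v) (matRpow (B + (δ:ℂ) • 1) s *ᵥ v)).re
      = ∑ i, rfun s (hB.1.eigenvalues i + δ) * aB i :=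
    ((hRB.addSmulOne δ).matRpow s).re_dot v
  rw [hqA, hqB] at hq'
  exact hq'

lemma trace_mul_re_mono_right {X Y Y' : Matrix ι ι ℂ} (h : (Y' - Y).PosSemidef)
    (hX : X.PosSemidef) : ((X * Y).trace).re ≤ ((X * Y').trace).re := by
  rw [Matrix.trace_mul_comm X Y, Matrix.trace_mul_comm X Y']
  exact trace_mul_re_mono h hX

lemma trace_mul_sub_right (X Y Z : Matrix ι ι ℂ) :
    ((X * (Y - Z)).trace).re = ((X * Y).trace).re - ((X * Z).trace).re := by
  rw [Matrix.mul_sub, Matrix.trace_sub, Complex.sub_re]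

lemma trace_rpow_mul_rpow {M : Matrix ι ι ℂ} (hM : M.PosSemidef) (s : ℝ) :
    ((matRpow M s * matRpow M (1 - s)).trace).re = (M.trace).re := by
  have hR := Rep.rep_spectral hM.1
  have hmul := (hR.matRpow s).mul (hR.matRpow (1 - s))
  rw [hmul.trace_re, hR.trace_re]
  apply Finset.sum_congr rfl
  intro i _
  have hnn := hM.eigenvalues_nonneg i
  rcases lt_or_eq_of_le hnn with hpos | hzero
  · simp only [Pi.mul_apply, rfun, if_pos hpos]
    rw [← Real.rpow_add hpos, show s + (1 - s) = 1 by ring, Real.rpow_one]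
  · simp only [Pi.mul_apply]
    rw [← hzero]
    simp [rfun]

/-- Audenaert's inequality (Ozawa's proof). `Dp` is any PSD matrix with
`Dp - (A - B)` PSD (e.g. the positive part of `A - B`). -/
lemma audenaert_core {A B Dp : Matrix ι ι ℂ} (hA : A.PosSemidef) (hB : B.PosSemidef)
    (hDp : Dp.PosSemidef) (hDm : (Dp - (A - B)).PosSemidef)
    {s : ℝ} (hs : s ∈ Set.Ioo (0:ℝ) 1) :
    (A.trace).re - (Dp.trace).re ≤ ((matRpow A s * matRpow B (1 - s)).trace).re := by
  obtain ⟨hs0, hs1⟩ := hs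
  have hs' : (1 - s) ∈ Set.Ioo (0:ℝ) 1 := ⟨by linarith, by linarith⟩
  set C : Matrix ι ι ℂ := B + Dp with hC
  have hCpsd : C.PosSemidef := hB.add hDp
  have hCA : (C - A).PosSemidef := by
    have h5 : C - A = Dp - (A - B) := by rw [hC]; abel
    rw [h5]
    exact hDm
  have hCB : (C - B).PosSemidef := by
    have h5 : C - B = Dp := by rw [hC]; abel
    rw [h5]
    exact hDp
  have LH1 := rpow_loewner hA hCpsd hCA hs'
  have LH2 := rpow_loewner hB hCpsd hCB hs'
  have LH3 := rpow_loewner hA hCpsd hCA ⟨hs0, hs1⟩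
  have LH4 := rpow_loewner hB hCpsd hCB ⟨hs0, hs1⟩
  have pAs := matRpow_posSemidef hA s
  have pBs1 := matRpow_posSemidef hB (1 - s)
  have pCs := matRpow_posSemidef hCpsd s
  have g0 : ((matRpow A s * (matRpow A (1-s) - matRpow B (1-s))).trace).re
      = (A.trace).re - ((matRpow A s * matRpow B (1-s)).trace).re := by
    rw [trace_mul_sub_right, trace_rpow_mul_rpow hA]
  have g1 : ((matRpow A s * (matRpow A (1-s) - matRpow B (1-s))).trace).re
      ≤ ((matRpow A s * (matRpow C (1-s) - matRpow B (1-s))).trace).re := by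
    apply trace_mul_re_mono_right _ pAs
    have h5 : (matRpow C (1-s) - matRpow B (1-s)) - (matRpow A (1-s) - matRpow B (1-s))
        = matRpow C (1-s) - matRpow A (1-s) := by abel
    rw [h5]
    exact LH1
  have hYpsd : (matRpow C (1-s) - matRpow B (1-s)).PosSemidef := LH2
  have g2 : ((matRpow A s * (matRpow C (1-s) - matRpow B (1-s))).trace).re
      ≤ ((matRpow C s * (matRpow C (1-s) - matRpow B (1-s))).trace).re :=
    trace_mul_re_mono LH3 hYpsd
  have g3 : ((matRpow C s * (matRpow C (1-s) - matRpow B (1-s))).trace).re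
      = (C.trace).re - ((matRpow C s * matRpow B (1-s)).trace).re := by
    rw [trace_mul_sub_right, trace_rpow_mul_rpow hCpsd]
  have g4 : ((matRpow B s * matRpow B (1-s)).trace).re
      ≤ ((matRpow C s * matRpow B (1-s)).trace).re :=
    trace_mul_re_mono LH4 pBs1
  have g5 : ((matRpow B s * matRpow B (1-s)).trace).re = (B.trace).re :=
    trace_rpow_mul_rpow hB s
  have g6 : (C.trace).re = (B.trace).re + (Dp.trace).re := by
    rw [hC, Matrix.trace_add, Complex.add_re]
  linarith


/-- **Quantum Hoeffding (direct) bound for asymmetric binary quantum hypothesis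
testing**: for `α ∈ (0,1)` and `ε ∈ (0,1)`, `β_ε(ρ‖σ) > 0`,
`−ln β_ε(ρ‖σ) ≥ D_α(ρ‖σ) + (α/(α−1)) ln(1/ε)`; equivalently
`β_ε(ρ‖σ) ≤ (Tr[ρ^α σ^{1−α}] / ε^α)^{1/(1−α)}`. -/
theorem quantum_hoeffding_bound {d : ℕ} (ρ σ : Matrix (Fin d) (Fin d) ℂ)
    (hρ : IsState ρ) (hσ : IsState σ) (hσpd : σ.PosDef)
    (α : ℝ) (hα : α ∈ Set.Ioo (0 : ℝ) 1) (ε : ℝ) (hε : ε ∈ Set.Ioo (0 : ℝ) 1) :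
    0 < betaErr ε ρ σ ∧
    petzRenyi α ρ σ + (α / (α - 1)) * Real.log (1 / ε) ≤ -Real.log (betaErr ε ρ σ) ∧
    betaErr ε ρ σ ≤ (Qs α ρ σ / ε ^ α) ^ ((1 : ℝ) / (1 - α)) := by
  obtain ⟨hα0, hα1⟩ := hα
  obtain ⟨hε0, hε1⟩ := hε
  have hα1' : (1:ℝ) - α ≠ 0 := by linarith
  haveI hne : Nonempty (Fin d) := by
    by_contra hno
    rw [not_nonempty_iff] at hno
    have h0 : ρ.trace = 0 := by
      rw [Matrix.trace, Finset.univ_eq_empty, Finset.sum_empty]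
    rw [hρ.2] at h0
    exact one_ne_zero h0
  have hRρ := Rep.rep_spectral hρ.1.1
  have hRσ := Rep.rep_spectral hσ.1.1
  have htrρ : (ρ.trace).re = 1 := by rw [hρ.2, Complex.one_re]
  have htrσ : (σ.trace).re = 1 := by rw [hσ.2, Complex.one_re]
  -- `Q = Qs α ρ σ` is positive
  have hQs : Qs α ρ σ = ((matRpow ρ α * matRpow σ (1 - α)).trace).re := rfl
  set c1 : ℝ := Finset.univ.inf' Finset.univ_nonempty
    (fun i => rfun (1-α) (hσ.1.1.eigenvalues i)) with hc1
  have hσeig : ∀ i, 0 < hσ.1.1.eigenvalues i := fun i => hσpd.eigenvalues_pos i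
  have hc1pos : 0 < c1 := by
    rw [hc1, Finset.lt_inf'_iff]
    intro i _
    rw [rfun, if_pos (hσeig i)]
    exact Real.rpow_pos_of_pos (hσeig i) _
  have hσc1 : (matRpow σ (1-α) - (c1:ℂ) • 1).PosSemidef := by
    apply ((hRσ.matRpow (1-α)).sub (hRσ.one_of.smul c1)).posSemidef
    intro i
    have := Finset.inf'_le (fun i => rfun (1-α) (hσ.1.1.eigenvalues i))
      (Finset.mem_univ i)
    simp only [Pi.sub_apply, Pi.smul_apply, smul_eq_mul, mul_one]
    rw [← hc1] at this
    linarith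
  have hραtr : 0 < ((matRpow ρ α).trace).re := by
    rw [(hRρ.matRpow α).trace_re]
    have hsum1 : ∑ i, hρ.1.1.eigenvalues i = 1 := by
      rw [← hRρ.trace_re, htrρ]
    obtain ⟨i0, hi0⟩ : ∃ i, 0 < hρ.1.1.eigenvalues i := by
      by_contra hcon
      push_neg at hcon
      have : ∑ i, hρ.1.1.eigenvalues i = 0 :=
        Finset.sum_eq_zero fun i _ =>
          le_antisymm (hcon i) (hρ.1.eigenvalues_nonneg i)
      rw [hsum1] at this
      exact one_ne_zero this
    apply Finset.sum_pos' (fun i _ => rfun_nonneg)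
    refine ⟨i0, Finset.mem_univ _, ?_⟩
    rw [rfun, if_pos hi0]
    exact Real.rpow_pos_of_pos hi0 _
  have hQpos : 0 < Qs α ρ σ := by
    have hmono := trace_mul_re_mono_right hσc1 (matRpow_posSemidef hρ.1 α)
    have heval : ((matRpow ρ α * ((c1:ℂ) • 1)).trace).re
        = c1 * ((matRpow ρ α).trace).re := by
      rw [Matrix.mul_smul, Matrix.mul_one, Matrix.trace_smul, smul_eq_mul,
        Complex.re_ofReal_mul]
    rw [heval] at hmono
    rw [hQs]
    calc (0:ℝ) < c1 * ((matRpow ρ α).trace).re := mul_pos hc1pos hραtr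
      _ ≤ _ := hmono
  -- the test projection
  set μ : ℝ := (ε / Qs α ρ σ) ^ ((1:ℝ)/(1-α)) with hμ
  have hμpos : 0 < μ := Real.rpow_pos_of_pos (div_pos hε0 hQpos) _
  set B : Matrix (Fin d) (Fin d) ℂ := (μ:ℂ) • σ with hBdef
  have hRB : Rep B (hσ.1.1.eigenvectorUnitary : Matrix (Fin d) (Fin d) ℂ)
      (μ • hσ.1.1.eigenvalues) := hRσ.smul μ
  have hBpsd : B.PosSemidef := hRB.posSemidef fun i => by
    simp only [Pi.smul_apply, smul_eq_mul]
    exact mul_nonneg hμpos.le (hσeig i).le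
  have hHherm : (ρ - B).IsHermitian := hρ.1.1.sub hRB.isHermitian
  have hRH := Rep.rep_spectral hHherm
  set UH : Matrix (Fin d) (Fin d) ℂ := (hHherm.eigenvectorUnitary : Matrix (Fin d) (Fin d) ℂ)
  set hh : Fin d → ℝ := hHherm.eigenvalues with hhh
  set ind : Fin d → ℝ := fun i => if 0 < hh i then 1 else 0 with hind
  set P : Matrix (Fin d) (Fin d) ℂ :=
    UH * Matrix.diagonal (fun i => ((ind i : ℝ) : ℂ)) * star UH with hPdef
  have hRP : Rep P UH ind := ⟨hRH.1, hRH.2.1, rfl⟩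
  set Dp : Matrix (Fin d) (Fin d) ℂ :=
    UH * Matrix.diagonal (fun i => ((max (hh i) 0 : ℝ) : ℂ)) * star UH with hDpdef
  have hRDp : Rep Dp UH (fun i => max (hh i) 0) := ⟨hRH.1, hRH.2.1, rfl⟩
  have hPpsd : P.PosSemidef := hRP.posSemidef fun i => by
    by_cases h5 : 0 < hh i <;> simp [hind, h5]
  have h1Ppsd : (1 - P).PosSemidef := (hRH.one_of.sub hRP).posSemidef fun i => by
    by_cases h5 : 0 < hh i <;> simp [hind, h5]
  have hDppsd : Dp.PosSemidef := hRDp.posSemidef fun i => le_max_right _ _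
  have hDmpsd : (Dp - (ρ - B)).PosSemidef := (hRDp.sub hRH).posSemidef fun i => by
    simp only [Pi.sub_apply]
    exact sub_nonneg.mpr (le_max_left _ _)
  have aud := audenaert_core hρ.1 hBpsd hDppsd hDmpsd ⟨hα0, hα1⟩
  -- evaluate the RHS of Audenaert
  have hBpow : matRpow B (1-α) = ((μ ^ (1-α) : ℝ) : ℂ) • matRpow σ (1-α) := by
    apply Rep.matrix_eq (hRB.matRpow (1-α)) ((hRσ.matRpow (1-α)).smul (μ ^ (1-α)))
    intro i
    simp only [Pi.smul_apply, smul_eq_mul]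
    rw [rfun, rfun, if_pos (mul_pos hμpos (hσeig i)), if_pos (hσeig i),
      Real.mul_rpow hμpos.le (hσeig i).le]
  have hTB : ((matRpow ρ α * matRpow B (1-α)).trace).re = μ ^ (1-α) * Qs α ρ σ := by
    rw [hBpow, Matrix.mul_smul, Matrix.trace_smul, smul_eq_mul, Complex.re_ofReal_mul, hQs]
  have hμQ : μ ^ (1-α) * Qs α ρ σ = ε := by
    rw [hμ, ← Real.rpow_mul (div_pos hε0 hQpos).le, one_div_mul_cancel hα1', Real.rpow_one,
      div_mul_cancel₀ _ (ne_of_gt hQpos)]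
  have hHP : (((ρ - B) * P).trace).re = (Dp.trace).re := by
    rw [(hRH.mul hRP).trace_re, hRDp.trace_re]
    apply Finset.sum_congr rfl
    intro i _
    simp only [Pi.mul_apply]
    by_cases h5 : 0 < hh i
    · simp only [hind]
      rw [if_pos h5, mul_one, max_eq_left h5.le]
    · simp only [hind]
      rw [if_neg h5, mul_zero, max_eq_right (not_lt.1 h5)]
  have hsplit : (((ρ - B) * P).trace).re = ((ρ * P).trace).re - μ * ((σ * P).trace).re := by
    rw [hBdef, Matrix.sub_mul, Matrix.trace_sub, Complex.sub_re, Matrix.smul_mul,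
      Matrix.trace_smul, smul_eq_mul, Complex.re_ofReal_mul]
  have hT1 : (((1 - P) * ρ).trace).re = 1 - ((ρ * P).trace).re := by
    rw [Matrix.sub_mul, Matrix.one_mul, Matrix.trace_sub, Complex.sub_re, htrρ,
      Matrix.trace_mul_comm]
  have hσP : 0 ≤ ((σ * P).trace).re := trace_mul_re_nonneg hσ.1 hPpsd
  have h1Pρ : 0 ≤ (((1 - P) * ρ).trace).re := trace_mul_re_nonneg h1Ppsd hρ.1
  have hDptr : (Dp.trace).re = ((ρ * P).trace).re - μ * ((σ * P).trace).re := by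
    rw [← hHP, hsplit]
  have hkey : 1 - ((ρ * P).trace).re + μ * ((σ * P).trace).re ≤ ε := by
    have h7 := aud
    rw [hTB, hμQ, htrρ, hDptr] at h7
    linarith
  have herr1 : (((1 - P) * ρ).trace).re ≤ ε := by
    rw [hT1]
    nlinarith [mul_nonneg hμpos.le hσP]
  have herr2 : μ * ((P * σ).trace).re ≤ ε := by
    rw [Matrix.trace_mul_comm]
    have h8 : 0 ≤ 1 - ((ρ * P).trace).re := by rw [← hT1]; exact h1Pρ
    linarith
  set R : ℝ := (Qs α ρ σ / ε ^ α) ^ ((1:ℝ)/(1-α)) with hR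
  have hεα : (0:ℝ) < ε ^ α := Real.rpow_pos_of_pos hε0 _
  have hRpos : 0 < R := Real.rpow_pos_of_pos (div_pos hQpos hεα) _
  have hμR : μ * R = ε := by
    rw [hμ, hR, ← Real.mul_rpow (div_pos hε0 hQpos).le (div_pos hQpos hεα).le]
    have h6 : ε / Qs α ρ σ * (Qs α ρ σ / ε ^ α) = ε ^ (1 - α) := by
      rw [Real.rpow_sub hε0, Real.rpow_one]
      field_simp
    rw [h6, ← Real.rpow_mul hε0.le, mul_one_div_cancel hα1', Real.rpow_one]
  have hT2R : ((P * σ).trace).re ≤ R := by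
    have h9 := herr2
    rw [← hμR] at h9
    exact le_of_mul_le_mul_left h9 hμpos
  -- the feasible set of `betaErr`
  have hβdef : betaErr ε ρ σ = sInf { x : ℝ | ∃ Λ : Matrix (Fin d) (Fin d) ℂ,
      Λ.PosSemidef ∧ (1 - Λ).PosSemidef ∧
      (((1 - Λ) * ρ).trace).re ≤ ε ∧ x = ((Λ * σ).trace).re } := rfl
  have hmemP : ((P * σ).trace).re ∈ { x : ℝ | ∃ Λ : Matrix (Fin d) (Fin d) ℂ,
      Λ.PosSemidef ∧ (1 - Λ).PosSemidef ∧
      (((1 - Λ) * ρ).trace).re ≤ ε ∧ x = ((Λ * σ).trace).re } :=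
    ⟨P, hPpsd, h1Ppsd, herr1, rfl⟩
  have hmem1 : (1:ℝ) ∈ { x : ℝ | ∃ Λ : Matrix (Fin d) (Fin d) ℂ,
      Λ.PosSemidef ∧ (1 - Λ).PosSemidef ∧
      (((1 - Λ) * ρ).trace).re ≤ ε ∧ x = ((Λ * σ).trace).re } := by
    refine ⟨1, Matrix.PosSemidef.one, ?_, ?_, ?_⟩
    · rw [sub_self]
      exact Matrix.PosSemidef.zero
    · rw [sub_self, Matrix.zero_mul, Matrix.trace_zero]
      simpa using hε0.le
    · rw [Matrix.one_mul, htrσ]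
  set c0 : ℝ := Finset.univ.inf' Finset.univ_nonempty hσ.1.1.eigenvalues with hc0
  have hc0pos : 0 < c0 := by
    rw [hc0, Finset.lt_inf'_iff]
    exact fun i _ => hσeig i
  have hσc0 : (σ - (c0:ℂ) • 1).PosSemidef :=
    (hRσ.sub (hRσ.one_of.smul c0)).posSemidef fun i => by
      simp only [Pi.sub_apply, Pi.smul_apply, smul_eq_mul, mul_one]
      have h10 := Finset.inf'_le hσ.1.1.eigenvalues (Finset.mem_univ i)
      rw [← hc0] at h10
      linarith
  have h1ρpsd : ((1 : Matrix (Fin d) (Fin d) ℂ) - ρ).PosSemidef :=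
    (hRρ.one_of.sub hRρ).posSemidef fun i => by
      simp only [Pi.sub_apply]
      have hsum1 : ∑ j, hρ.1.1.eigenvalues j = 1 := by rw [← hRρ.trace_re, htrρ]
      have h11 := Finset.single_le_sum (f := hρ.1.1.eigenvalues)
        (fun j _ => hρ.1.eigenvalues_nonneg j) (Finset.mem_univ i)
      rw [hsum1] at h11
      linarith
  have hlb : ∀ x ∈ { x : ℝ | ∃ Λ : Matrix (Fin d) (Fin d) ℂ,
      Λ.PosSemidef ∧ (1 - Λ).PosSemidef ∧
      (((1 - Λ) * ρ).trace).re ≤ ε ∧ x = ((Λ * σ).trace).re }, c0 * (1 - ε) ≤ x := by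
    rintro x ⟨Λ, hΛ, h1Λ, herr, rfl⟩
    have e1 : ((Λ * ((c0:ℂ) • 1)).trace).re ≤ ((Λ * σ).trace).re :=
      trace_mul_re_mono_right hσc0 hΛ
    have e2 : ((Λ * ((c0:ℂ) • 1)).trace).re = c0 * (Λ.trace).re := by
      rw [Matrix.mul_smul, Matrix.mul_one, Matrix.trace_smul, smul_eq_mul,
        Complex.re_ofReal_mul]
    have e3 : ((Λ * ρ).trace).re ≤ (Λ.trace).re := by
      have e3' := trace_mul_re_mono_right h1ρpsd hΛ
      rwa [Matrix.mul_one] at e3'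
    have e4 : 1 - ((Λ * ρ).trace).re ≤ ε := by
      have e5 : (((1 - Λ) * ρ).trace).re = 1 - ((Λ * ρ).trace).re := by
        rw [Matrix.sub_mul, Matrix.one_mul, Matrix.trace_sub, Complex.sub_re, htrρ,
          Matrix.trace_mul_comm]
      rwa [e5] at herr
    calc c0 * (1 - ε) ≤ c0 * ((Λ * ρ).trace).re := by
          apply mul_le_mul_of_nonneg_left _ hc0pos.le
          linarith
      _ ≤ c0 * (Λ.trace).re := mul_le_mul_of_nonneg_left e3 hc0pos.le
      _ = ((Λ * ((c0:ℂ) • 1)).trace).re := e2.symm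
      _ ≤ ((Λ * σ).trace).re := e1
  have hβlb : c0 * (1 - ε) ≤ betaErr ε ρ σ := by
    rw [hβdef]
    exact le_csInf ⟨_, hmem1⟩ hlb
  have hβpos : 0 < betaErr ε ρ σ := by
    have h12 : (0:ℝ) < c0 * (1 - ε) := by nlinarith
    linarith
  have hbdd : BddBelow { x : ℝ | ∃ Λ : Matrix (Fin d) (Fin d) ℂ,
      Λ.PosSemidef ∧ (1 - Λ).PosSemidef ∧
      (((1 - Λ) * ρ).trace).re ≤ ε ∧ x = ((Λ * σ).trace).re } := by
    refine ⟨0, ?_⟩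
    rintro x ⟨Λ, hΛ, _, _, rfl⟩
    exact trace_mul_re_nonneg hΛ hσ.1
  have hβub : betaErr ε ρ σ ≤ R := by
    rw [hβdef]
    exact le_trans (csInf_le hbdd hmemP) hT2R
  refine ⟨hβpos, ?_, hβub⟩
  have hlogβ : Real.log (betaErr ε ρ σ) ≤ Real.log R := Real.log_le_log hβpos hβub
  have hlogR : Real.log R = (1/(1-α)) * (Real.log (Qs α ρ σ) - α * Real.log ε) := by
    rw [hR, Real.log_rpow (div_pos hQpos hεα),
      Real.log_div (ne_of_gt hQpos) (ne_of_gt hεα), Real.log_rpow hε0]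
  have hpetz : petzRenyi α ρ σ = (1/(α-1)) * Real.log (Qs α ρ σ) := rfl
  have hαm1 : α - 1 ≠ 0 := by
    intro h13
    apply hα1'
    linarith
  have hfin : petzRenyi α ρ σ + (α/(α-1)) * Real.log (1/ε) = -Real.log R := by
    rw [hpetz, hlogR, show Real.log (1/ε) = -Real.log ε by rw [one_div, Real.log_inv]]
    field_simp
    ring
  rw [hfin]
  linarith


end QHT

end
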